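/- Let p be a prime not dividing any of a, b, c, and let k ≥ 0. Then for all i with 0 < i < p^k, a·M[i, p^k−1] + b·M[i−1, p^k−1] ≡ 0 (mod p), and for all j with 0 < j < p^k, b·M[p^k−1, j−1] + c·M[p^k−1, j] ≡ 0 (mod p). -/

import Mathlib

/-- The matrix `M` from Definition 4.1: `M[0,0] = 1`, `M[0,j] = a^j` for `j > 0`,
`M[i,0] = c^i` for `i > 0`, and `M[i,j] = a*M[i,j-1] + b*M[i-1,j-1] + c*M[i-1,j]`
for `i, j > 0`. -/
def M (a b c : ℕ) : ℕ → ℕ → ℕ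
  | 0, 0 => 1
  | 0, j + 1 => a ^ (j + 1)
  | i + 1, 0 => c ^ (i + 1)
  | i + 1, j + 1 =>
      a * M a b c (i + 1) j + b * M a b c i j + c * M a b c i (j + 1)
  termination_by i j => i + j

/-- Closed form candidate for `M`. -/
def Msum (a b c i j : ℕ) : ℕ :=
  ∑ t ∈ Finset.range (i + 1),
    Nat.choose j t * Nat.choose (i + j - t) (i - t) * (a ^ (j - t) * b ^ t * c ^ (i - t))

open Finset in
lemma Msum_step (a b c i j : ℕ) :
    Msum a b c (i+1) (j+1)
      = a * Msum a b c (i+1) j + b * Msum a b c i j + c * Msum a b c i (j+1) := by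
  set D : ℕ → ℕ := fun t =>
    (j+1).choose t * ((i+j+1-t).choose (i+1-t)) * (a^(j+1-t) * b^t * c^(i+1-t)) with hD
  set B : ℕ → ℕ := fun t =>
    (j+1).choose t * ((i+j+1-t).choose (i-t)) * (a^(j+1-t) * b^t * c^(i+1-t)) with hB
  set H : ℕ → ℕ := fun t =>
    j.choose t * ((i+j+1-t).choose (i+1-t)) * (a^(j+1-t) * b^t * c^(i+1-t)) with hH
  have hLHS : Msum a b c (i+1) (j+1)
      = (∑ t ∈ range (i+1), B t) + ((∑ t ∈ range (i+1), D t) + D (i+1)) := by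
    rw [Msum, Finset.sum_range_succ]
    have h1 : ∑ t ∈ range (i+1),
        (j+1).choose t * ((i+1+(j+1)-t).choose (i+1-t)) * (a^(j+1-t) * b^t * c^(i+1-t))
        = ∑ t ∈ range (i+1), (B t + D t) := by
      apply Finset.sum_congr rfl
      intro t ht
      rw [Finset.mem_range] at ht
      have ht' : t ≤ i := by omega
      have e1 : i+1+(j+1)-t = (i+j+1-t)+1 := by omega
      have e2 : i+1-t = (i-t)+1 := by omega
      rw [hB, hD]
      simp only []
      rw [e1, e2, Nat.choose_succ_succ]
      ring
    rw [h1, Finset.sum_add_distrib]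
    have e3 : i+1+(j+1)-(i+1) = j+1 := by omega
    have e4 : i+1-(i+1) = 0 := by omega
    rw [e3, e4]
    simp only [hD]
    have e5 : i+j+1-(i+1) = j := by omega
    rw [e5, e4, Nat.choose_zero_right, Nat.choose_zero_right]
    ring
  have hC : c * Msum a b c i (j+1) = ∑ t ∈ range (i+1), B t := by
    rw [Msum, Finset.mul_sum]
    apply Finset.sum_congr rfl
    intro t ht
    rw [Finset.mem_range] at ht
    have ht' : t ≤ i := by omega
    have e1 : i+(j+1)-t = i+j+1-t := by omega
    have e2 : i+1-t = (i-t)+1 := by omega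
    rw [hB]; simp only []
    rw [e1, e2, pow_succ]
    ring
  have hA : a * Msum a b c (i+1) j = ∑ t ∈ range (i+2), H t := by
    rw [Msum, Finset.mul_sum]
    apply Finset.sum_congr rfl
    intro t ht
    rw [hH]; simp only []
    have e1 : i+1+j-t = i+j+1-t := by omega
    rw [e1]
    rcases le_or_gt t j with h | h
    · have e2 : j+1-t = (j-t)+1 := by omega
      rw [e2, pow_succ]; ring
    · rw [Nat.choose_eq_zero_of_lt h]
      ring
  have hBpart : b * Msum a b c i j
      = ∑ t ∈ range (i+1), (D (t+1) - H (t+1)) := by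
    rw [Msum, Finset.mul_sum]
    apply Finset.sum_congr rfl
    intro t ht
    rw [hD, hH]; simp only []
    have e1 : i+j+1-(t+1) = i+j-t := by omega
    have e2 : i+1-(t+1) = i-t := by omega
    have e3 : j+1-(t+1) = j-t := by omega
    rw [e1, e2, e3, Nat.choose_succ_succ]
    have : (j.choose t + j.choose (t+1)) * (i+j-t).choose (i-t)
          * (a^(j-t) * b^(t+1) * c^(i-t))
        - j.choose (t+1) * (i+j-t).choose (i-t) * (a^(j-t) * b^(t+1) * c^(i-t))
        = j.choose t * (i+j-t).choose (i-t) * (a^(j-t) * b^(t+1) * c^(i-t)) := by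
      rw [Nat.add_mul, Nat.add_mul, Nat.add_sub_cancel]
    rw [this]
    ring
  rw [hLHS, hA, hBpart, hC, Finset.sum_range_succ' H (i+1)]
  have h2 : ∑ t ∈ range (i+1), H (t+1) + ∑ t ∈ range (i+1), (D (t+1) - H (t+1))
      = ∑ t ∈ range (i+1), D (t+1) := by
    rw [← Finset.sum_add_distrib]
    apply Finset.sum_congr rfl
    intro t _
    have hle : H (t+1) ≤ D (t+1) := by
      rw [hH, hD]; simp only []
      have := Nat.choose_le_choose (t+1) (Nat.le_succ j)
      exact Nat.mul_le_mul_right _ (Nat.mul_le_mul_right _ this)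
    omega
  have h3 : H 0 = D 0 := by rw [hH, hD]; simp
  have h4 : (∑ t ∈ range (i+1), D (t+1)) + D 0 = (∑ t ∈ range (i+1), D t) + D (i+1) := by
    rw [← Finset.sum_range_succ', Finset.sum_range_succ]
  omega

lemma Msum_zero_left (a b c j : ℕ) : Msum a b c 0 j = a ^ j := by
  simp [Msum]

lemma Msum_zero_right (a b c i : ℕ) : Msum a b c (i+1) 0 = c ^ (i+1) := by
  rw [Msum, Finset.sum_range_succ']
  simp

lemma M_eq_Msum (a b c : ℕ) : ∀ i j, M a b c i j = Msum a b c i j := by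
  intro i j
  induction i, j using M.induct with
  | case1 => simp [M, Msum]
  | case2 j => rw [M, Msum_zero_left]
  | case3 i => rw [M, Msum_zero_right]
  | case4 i j h1 h2 h3 => rw [M, Msum_step, h1, h2, h3]

lemma M_symm (a b c : ℕ) : ∀ i j, M a b c i j = M c b a j i := by
  intro i j
  induction i, j using M.induct with
  | case1 => rw [M, M]
  | case2 j => rw [M, M]
  | case3 i => rw [M, M]
  | case4 i j h1 h2 h3 => rw [M, M, h1, h2, h3]; ring

lemma factA (p : ℕ) (hp : p.Prime) (k : ℕ) :
    ∀ t, t < p ^ k → (((p ^ k - 1).choose t : ℕ) : ZMod p) = (-1) ^ t := by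
  haveI : NeZero p := ⟨hp.ne_zero⟩
  intro t
  induction t with
  | zero => simp
  | succ t ih =>
    intro ht
    have hp1 : 1 ≤ p ^ k := Nat.one_le_pow _ _ hp.pos
    have hpas : (p ^ k).choose (t+1) = (p^k-1).choose t + (p^k-1).choose (t+1) := by
      conv_lhs => rw [show p ^ k = (p ^ k - 1) + 1 by omega]
      exact Nat.choose_succ_succ _ _
    have hdvd : p ∣ (p ^ k).choose (t+1) := hp.dvd_choose_pow (by omega) (by omega)
    have h0 : (((p ^ k).choose (t+1) : ℕ) : ZMod p) = 0 :=
      (ZMod.natCast_eq_zero_iff _ p).mpr hdvd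
    rw [hpas] at h0
    push_cast at h0
    rw [ih (by omega)] at h0
    linear_combination h0

lemma factB (p : ℕ) (hp : p.Prime) (k : ℕ) :
    ∀ m, 0 < m → m < p ^ k → (((p ^ k - 1 + m).choose m : ℕ) : ZMod p) = 0 := by
  haveI : NeZero p := ⟨hp.ne_zero⟩
  intro m hm hmk
  have hp1 : 1 ≤ p ^ k := Nat.one_le_pow _ _ hp.pos
  have h1 : p ^ k - 1 + m = p ^ k + (m - 1) := by omega
  rw [h1, Nat.add_choose_eq]
  push_cast
  apply Finset.sum_eq_zero
  rintro ⟨x, y⟩ hxy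
  rw [Finset.HasAntidiagonal.mem_antidiagonal] at hxy
  rcases Nat.eq_zero_or_pos x with hx | hx
  · have hy : m - 1 < y := by omega
    rw [Nat.choose_eq_zero_of_lt hy]
    simp
  · have hdvd : p ∣ (p ^ k).choose x := hp.dvd_choose_pow (by omega) (by omega)
    rw [(ZMod.natCast_eq_zero_iff _ p).mpr hdvd]
    simp

lemma M_row (p a b c : ℕ) (hp : p.Prime) (k : ℕ) :
    ∀ i ≤ p ^ k - 1, ((M a b c i (p ^ k - 1) : ℕ) : ZMod p)
      = (-1) ^ i * (a : ZMod p) ^ (p ^ k - 1 - i) * (b : ZMod p) ^ i := by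
  intro i hi
  have hp1 : 1 ≤ p ^ k := Nat.one_le_pow _ _ hp.pos
  rw [M_eq_Msum, Msum]
  push_cast
  rw [Finset.sum_eq_single i]
  · have e0 : i + (p ^ k - 1) - i = p ^ k - 1 := by omega
    have e1 : i - i = 0 := by omega
    rw [e0, e1, Nat.choose_zero_right, factA p hp k i (by omega)]
    push_cast; ring
  · intro t ht hne
    rw [Finset.mem_range] at ht
    have htlt : t < i := by omega
    have e0 : i + (p ^ k - 1) - t = (p ^ k - 1) + (i - t) := by omega
    rw [e0, factB p hp k (i - t) (by omega) (by omega)]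
    ring
  · intro h; exact absurd (Finset.self_mem_range_succ i) h

/-- Part (b) of the induction in the proof of Theorem 4.4: for `p` prime not dividing
`a`, `b`, or `c`, and any `k ≥ 0`: for `0 < i < p^k`,
`a·M[i, p^k-1] + b·M[i-1, p^k-1] ≡ 0 (mod p)`, and for `0 < j < p^k`,
`b·M[p^k-1, j-1] + c·M[p^k-1, j] ≡ 0 (mod p)`. -/
theorem M_sum_block (p a b c : ℕ) (hp : p.Prime)
    (ha : ¬ p ∣ a) (hb : ¬ p ∣ b) (hc : ¬ p ∣ c) (k : ℕ) :
    (∀ i : ℕ, 0 < i → i < p ^ k →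
      a * M a b c i (p ^ k - 1) + b * M a b c (i - 1) (p ^ k - 1) ≡ 0 [MOD p]) ∧
    (∀ j : ℕ, 0 < j → j < p ^ k →
      b * M a b c (p ^ k - 1) (j - 1) + c * M a b c (p ^ k - 1) j ≡ 0 [MOD p]) := by
  haveI : NeZero p := ⟨hp.ne_zero⟩
  have hp1 : 1 ≤ p ^ k := Nat.one_le_pow _ _ hp.pos
  constructor
  · intro i hi0 hik
    rw [Nat.modEq_zero_iff_dvd, ← ZMod.natCast_eq_zero_iff]
    obtain ⟨i', rfl⟩ : ∃ i', i = i' + 1 := ⟨i - 1, by omega⟩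
    push_cast
    rw [M_row p a b c hp k (i' + 1) (by omega),
        M_row p a b c hp k i' (by omega)]
    have e2 : p ^ k - 1 - i' = (p ^ k - 1 - (i' + 1)) + 1 := by omega
    rw [e2, pow_succ, pow_succ]
    ring
  · intro j hj0 hjk
    rw [Nat.modEq_zero_iff_dvd, ← ZMod.natCast_eq_zero_iff]
    obtain ⟨j', rfl⟩ : ∃ j', j = j' + 1 := ⟨j - 1, by omega⟩
    push_cast
    rw [M_symm a b c, M_symm a b c,
        M_row p c b a hp k (j' + 1) (by omega),
        M_row p c b a hp k j' (by omega)]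
    have e2 : p ^ k - 1 - j' = (p ^ k - 1 - (j' + 1)) + 1 := by omega
    rw [e2, pow_succ, pow_succ]
    ring
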